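/- Let V be an n-dimensional vector space over a field, let 1 ≤ r ≤ k ≤ n/2, and let 0 ≤ i ≤ r. Given two r-dimensional subspaces P_0 and P of V with dim(P ∩ P_0) = i, there exists a k-dimensional subspace H of V with P_0 ⊆ H and dim(P ∩ H) = i. -/

import Mathlib

theorem stmt6 {K V : Type*} [Field K] [AddCommGroup V] [Module K V]
    [FiniteDimensional K V] (n r k i : ℕ) (hn : Module.finrank K V = n)
    (hr : 1 ≤ r) (hrk : r ≤ k) (hk : 2 * k ≤ n) (hir : i ≤ r)
    (P P₀ : Submodule K V)
    (hP : Module.finrank K P = r) (hP₀ : Module.finrank K P₀ = r)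
    (hi : Module.finrank K (P ⊓ P₀ : Submodule K V) = i) :
    ∃ H : Submodule K V, Module.finrank K H = k ∧ P₀ ≤ H ∧
      Module.finrank K (P ⊓ H : Submodule K V) = i := by
  suffices h : ∀ m, r ≤ m → m ≤ k → ∃ H : Submodule K V,
      Module.finrank K H = m ∧ P₀ ≤ H ∧ P ⊓ H = P ⊓ P₀ by
    obtain ⟨H, h1, h2, h3⟩ := h k hrk le_rfl
    exact ⟨H, h1, h2, by rw [h3]; exact hi⟩
  intro m hm
  induction m, hm using Nat.le_induction with
  | base => exact fun _ => ⟨P₀, hP₀, le_rfl, rfl⟩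
  | succ m hm ih =>
    intro hmk
    obtain ⟨H, h1, h2, h3⟩ := ih (le_of_lt hmk)
    have hlt : Module.finrank K (P ⊔ H : Submodule K V) < Module.finrank K V := by
      have hsum := Submodule.finrank_sup_add_finrank_inf_eq P H
      rw [hP, h1] at hsum
      rw [hn]
      omega
    have hne : (P ⊔ H : Submodule K V) ≠ ⊤ := by
      intro h
      rw [h, finrank_top] at hlt
      exact lt_irrefl _ hlt
    obtain ⟨v, hv⟩ : ∃ v, v ∉ (P ⊔ H : Submodule K V) := by
      by_contra hc
      push_neg at hc
      exact hne (Submodule.eq_top_iff'.mpr hc)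
    have hvH : v ∉ H := fun h => hv (Submodule.mem_sup_right h)
    have hv0 : v ≠ 0 := fun h => hvH (h ▸ Submodule.zero_mem H)
    refine ⟨H ⊔ Submodule.span K {v}, ?_, le_trans h2 le_sup_left, ?_⟩
    · have hinf : H ⊓ Submodule.span K {v} = ⊥ := by
        rw [Submodule.eq_bot_iff]
        intro x ⟨hxH, hxs⟩
        obtain ⟨c, rfl⟩ := Submodule.mem_span_singleton.mp hxs
        rcases eq_or_ne c 0 with rfl | hc
        · simp
        · exact absurd (by simpa [inv_smul_smul₀ hc] using H.smul_mem c⁻¹ hxH) hvH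
      have := Submodule.finrank_sup_add_finrank_inf_eq H (Submodule.span K {v})
      rw [hinf, finrank_bot, h1, finrank_span_singleton hv0] at this
      omega
    · rw [← h3]
      apply le_antisymm
      · rintro x ⟨hxP, hxs⟩
        obtain ⟨h', hh', w, hw, rfl⟩ := Submodule.mem_sup.mp hxs
        obtain ⟨c, rfl⟩ := Submodule.mem_span_singleton.mp hw
        rcases eq_or_ne c 0 with rfl | hc
        · exact ⟨by simpa using hxP, by simpa using hh'⟩
        · exfalso
          apply hv
          have : c • v = (h' + c • v) - h' := by abel
          have hmem : c • v ∈ (P ⊔ H : Submodule K V) := by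
            rw [this]
            exact Submodule.sub_mem _ (Submodule.mem_sup_left hxP) (Submodule.mem_sup_right hh')
          simpa [inv_smul_smul₀ hc] using Submodule.smul_mem _ c⁻¹ hmem
      · exact inf_le_inf_left P le_sup_left
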